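/- Let g be a probability measure on ℝ, let M ≥ 1, and suppose g((−∞, log M]) = 1, i.e. Z ≤ log M g-almost surely. Define α(z) := ∫ min(1, exp(z'−z)) g(dz') and c := ∫ min(1, exp(z')/M) g(dz'). Then c > 0, α(z) ≥ c for all z ≤ log M, and consequently, for the meeting time τ := inf{n ≥ 1 : u_n ≤ min(1, exp(Z*_n − Z₀))} of the coupled chains (with Z₀ ~ g, Z*_n i.i.d. ~ g, u_n i.i.d. Uniform[0,1], all independent), P(τ > n) ≤ (1 − c)^n for all n ≥ 0. -/

import Mathlib

open MeasureTheory ProbabilityTheory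

noncomputable def coordGet (S : Finset (Option (ℕ ⊕ ℕ))) (v : {x // x ∈ S} → ℝ)
    (j : Option (ℕ ⊕ ℕ)) : ℝ :=
  if h : j ∈ S then v ⟨j, h⟩ else 0

lemma measurable_coordGet (S : Finset (Option (ℕ ⊕ ℕ))) (j : Option (ℕ ⊕ ℕ)) :
    Measurable (fun v => coordGet S v j) := by
  unfold coordGet
  split
  · exact measurable_pi_apply _
  · exact measurable_const

lemma coordGet_apply (S : Finset (Option (ℕ ⊕ ℕ))) (v : {x // x ∈ S} → ℝ)
    {j : Option (ℕ ⊕ ℕ)} (h : j ∈ S) : coordGet S v j = v ⟨j, h⟩ := dif_pos h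

def pimhBlock (n : ℕ) : Finset (Option (ℕ ⊕ ℕ)) :=
  ((Finset.Icc 1 n).image (fun k => some (Sum.inl k))) ∪
    ((Finset.Icc 1 n).image (fun k => some (Sum.inr k)))

lemma mem_pimhBlock_inl {n k : ℕ} (h : k ∈ Finset.Icc 1 n) :
    some (Sum.inl k) ∈ pimhBlock n :=
  Finset.mem_union_left _ (Finset.mem_image_of_mem _ h)

lemma mem_pimhBlock_inr {n k : ℕ} (h : k ∈ Finset.Icc 1 n) :
    some (Sum.inr k) ∈ pimhBlock n :=
  Finset.mem_union_right _ (Finset.mem_image_of_mem _ h)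

def blockSet (n : ℕ) (z0 : ℝ) : Set ({x // x ∈ pimhBlock n} → ℝ) :=
  ⋂ k ∈ Finset.Icc 1 n,
    {v | min 1 (Real.exp (coordGet (pimhBlock n) v (some (Sum.inl k)) - z0))
      < coordGet (pimhBlock n) v (some (Sum.inr k))}

lemma measurableSet_blockSet (n : ℕ) (z0 : ℝ) : MeasurableSet (blockSet n z0) := by
  refine MeasurableSet.biInter (Finset.Icc 1 n).countable_toSet (fun k _ => ?_)
  exact measurableSet_lt
    (measurable_const.min (((measurable_coordGet _ _).sub measurable_const).exp))
    (measurable_coordGet _ _)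

lemma preimage_blockSet {Ω : Type*} [MeasurableSpace Ω]
    (X : Option (ℕ ⊕ ℕ) → Ω → ℝ) (Zstar u : ℕ → Ω → ℝ)
    (hX1 : ∀ k, X (some (Sum.inl k)) = Zstar k)
    (hX2 : ∀ k, X (some (Sum.inr k)) = u k) (n : ℕ) (z0 : ℝ) :
    (fun ω (i : {x // x ∈ pimhBlock n}) => X i ω) ⁻¹' blockSet n z0
      = ⋂ k ∈ Finset.Icc 1 n, {ω | min 1 (Real.exp (Zstar k ω - z0)) < u k ω} := by
  ext ω
  simp only [blockSet, Set.mem_preimage, Set.mem_iInter, Set.mem_setOf_eq]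
  refine forall_congr' fun k => forall_congr' fun hk => ?_
  rw [coordGet_apply _ _ (mem_pimhBlock_inl hk), coordGet_apply _ _ (mem_pimhBlock_inr hk),
    hX1, hX2]

def pairBlock (m : ℕ) : Finset (Option (ℕ ⊕ ℕ)) := {some (Sum.inl m), some (Sum.inr m)}

def pairSet (m : ℕ) (z0 : ℝ) : Set ({x // x ∈ pairBlock m} → ℝ) :=
  {v | min 1 (Real.exp (coordGet (pairBlock m) v (some (Sum.inl m)) - z0))
    < coordGet (pairBlock m) v (some (Sum.inr m))}

lemma measurableSet_pairSet (m : ℕ) (z0 : ℝ) : MeasurableSet (pairSet m z0) :=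
  measurableSet_lt
    (measurable_const.min (((measurable_coordGet _ _).sub measurable_const).exp))
    (measurable_coordGet _ _)

lemma preimage_pairSet {Ω : Type*} [MeasurableSpace Ω]
    (X : Option (ℕ ⊕ ℕ) → Ω → ℝ) (Zstar u : ℕ → Ω → ℝ)
    (hX1 : ∀ k, X (some (Sum.inl k)) = Zstar k)
    (hX2 : ∀ k, X (some (Sum.inr k)) = u k) (m : ℕ) (z0 : ℝ) :
    (fun ω (i : {x // x ∈ pairBlock m}) => X i ω) ⁻¹' pairSet m z0
      = {ω | min 1 (Real.exp (Zstar m ω - z0)) < u m ω} := by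
  ext ω
  simp only [pairSet, Set.mem_preimage, Set.mem_setOf_eq]
  rw [coordGet_apply _ _ (by simp [pairBlock]), coordGet_apply _ _ (by simp [pairBlock]),
    hX1, hX2]

lemma pimh_inner {Ω : Type*} [MeasurableSpace Ω] {P : Measure Ω} [IsProbabilityMeasure P]
    (X : Option (ℕ ⊕ ℕ) → Ω → ℝ) (Zstar u : ℕ → Ω → ℝ)
    (hX1 : ∀ k, X (some (Sum.inl k)) = Zstar k)
    (hX2 : ∀ k, X (some (Sum.inr k)) = u k)
    (hXmeas : ∀ i, Measurable (X i))
    (hindep : iIndepFun X P)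
    (z0 r : ℝ) (hr : 0 ≤ r)
    (hstep : ∀ k, P {ω | min 1 (Real.exp (Zstar k ω - z0)) < u k ω} ≤ ENNReal.ofReal r)
    (n : ℕ) :
    P (⋂ k ∈ Finset.Icc 1 n, {ω | min 1 (Real.exp (Zstar k ω - z0)) < u k ω})
      ≤ ENNReal.ofReal (r ^ n) := by
  induction n with
  | zero => simp
  | succ n ih =>
    rw [← Finset.insert_Icc_right_eq_Icc_add_one (by omega : 1 ≤ n + 1), Finset.set_biInter_insert _ _ _,
      Set.inter_comm]
    have hdisj : Disjoint (pimhBlock n) (pairBlock (n + 1)) := by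
      simp only [Finset.disjoint_left, pimhBlock, pairBlock, Finset.mem_union,
        Finset.mem_image, Finset.mem_Icc, Finset.mem_insert, Finset.mem_singleton]
      rintro a (⟨k, hk, rfl⟩ | ⟨k, hk, rfl⟩) <;> simp <;> omega
    have hIF := hindep.indepFun_finset (pimhBlock n) (pairBlock (n + 1)) hdisj hXmeas
    have key := indepFun_iff_measure_inter_preimage_eq_mul.mp hIF
      (blockSet n z0) (pairSet (n + 1) z0)
      (measurableSet_blockSet n z0) (measurableSet_pairSet (n + 1) z0)
    rw [preimage_blockSet X Zstar u hX1 hX2 n z0,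
      preimage_pairSet X Zstar u hX1 hX2 (n + 1) z0] at key
    rw [key]
    calc P (⋂ k ∈ Finset.Icc 1 n, {ω | min 1 (Real.exp (Zstar k ω - z0)) < u k ω})
          * P {ω | min 1 (Real.exp (Zstar (n + 1) ω - z0)) < u (n + 1) ω}
        ≤ ENNReal.ofReal (r ^ n) * ENNReal.ofReal r := mul_le_mul' ih (hstep (n + 1))
      _ = ENNReal.ofReal (r ^ (n + 1)) := by
          rw [← ENNReal.ofReal_mul (pow_nonneg hr n), ← pow_succ]

lemma unif_Ioi {a : ℝ} (h0 : 0 ≤ a) (h1 : a ≤ 1) :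
    (volume.restrict (Set.Icc (0:ℝ) 1)) (Set.Ioi a) = ENNReal.ofReal (1 - a) := by
  rw [Measure.restrict_apply measurableSet_Ioi]
  have h : Set.Ioi a ∩ Set.Icc (0:ℝ) 1 = Set.Ioc a 1 := by
    ext x
    simp only [Set.mem_inter_iff, Set.mem_Ioi, Set.mem_Icc, Set.mem_Ioc]
    exact ⟨fun ⟨h1', _, h3⟩ => ⟨h1', h3⟩, fun ⟨h1', h2'⟩ => ⟨h1', le_trans h0 h1'.le, h2'⟩⟩
  rw [h, Real.volume_Ioc]

lemma pimh_pair_prob (g : Measure ℝ) [IsProbabilityMeasure g] (z0 : ℝ) :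
    (g.prod (volume.restrict (Set.Icc (0:ℝ) 1)))
      {p : ℝ × ℝ | min 1 (Real.exp (p.1 - z0)) < p.2}
      = ∫⁻ z, ENNReal.ofReal (1 - min 1 (Real.exp (z - z0))) ∂g := by
  rw [Measure.prod_apply (show MeasurableSet {p : ℝ × ℝ | min 1 (Real.exp (p.1 - z0)) < p.2} from
    (measurableSet_lt (measurable_const.min ((measurable_fst.sub measurable_const).exp))
      measurable_snd))]
  refine lintegral_congr fun z => ?_
  have hpre : Prod.mk z ⁻¹' {p : ℝ × ℝ | min 1 (Real.exp (p.1 - z0)) < p.2}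
      = Set.Ioi (min 1 (Real.exp (z - z0))) := rfl
  rw [hpre, unif_Ioi (le_min zero_le_one (Real.exp_pos _).le) (min_le_left _ _)]


/-- The meeting time `τ = inf{n ≥ 1 : u_n ≤ min(1, exp(Z*_n - Z₀))}` of the coupled
PIMH chains (valued in `ℕ∞`, equal to `⊤` if no such `n` exists). -/
noncomputable def meetingTime {Ω : Type*} (Z0 : Ω → ℝ) (Zstar u : ℕ → Ω → ℝ) (ω : Ω) : ℕ∞ :=
  sInf {t : ℕ∞ | ∃ n : ℕ, t = (n : ℕ∞) ∧ 1 ≤ n ∧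
    u n ω ≤ min 1 (Real.exp (Zstar n ω - Z0 ω))}

/-- Geometric tails for the meeting time of coupled PIMH under bounded weights: if
`Z ≤ log M` `g`-a.s., then `c := ∫ min(1, exp(z')/M) g(dz')` is positive, lower-bounds
the acceptance probability `α(z)` for every `z ≤ log M`, and `P(τ > n) ≤ (1-c)^n`. -/
theorem meetingTime_geometric_tail
    {Ω : Type*} [MeasurableSpace Ω] (P : Measure Ω) [IsProbabilityMeasure P]
    (g : Measure ℝ) [IsProbabilityMeasure g]
    (Z0 : Ω → ℝ) (Zstar u : ℕ → Ω → ℝ)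
    (hZ0meas : Measurable Z0) (hZsmeas : ∀ n, Measurable (Zstar n))
    (humeas : ∀ n, Measurable (u n))
    (hindep : iIndepFun (β := fun _ : Option (ℕ ⊕ ℕ) => ℝ)
      (fun i : Option (ℕ ⊕ ℕ) => match i with
        | Option.none => Z0
        | Option.some (Sum.inl n) => Zstar n
        | Option.some (Sum.inr n) => u n) P)
    (hZ0law : P.map Z0 = g) (hZslaw : ∀ n, P.map (Zstar n) = g)
    (hulaw : ∀ n, P.map (u n) = volume.restrict (Set.Icc (0 : ℝ) 1))
    (M : ℝ) (hM : 1 ≤ M) (hbound : g (Set.Iic (Real.log M)) = 1) :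
    0 < ∫ z', min 1 (Real.exp z' / M) ∂g ∧
    (∀ z ≤ Real.log M,
      (∫ z', min 1 (Real.exp z' / M) ∂g) ≤ ∫ z', min 1 (Real.exp (z' - z)) ∂g) ∧
    (∀ n : ℕ, P {ω | (n : ℕ∞) < meetingTime Z0 Zstar u ω}
      ≤ ENNReal.ofReal ((1 - ∫ z', min 1 (Real.exp z' / M) ∂g) ^ n)) := by
  have hM0 : (0:ℝ) < M := lt_of_lt_of_le one_pos hM
  set c : ℝ := ∫ z', min 1 (Real.exp z' / M) ∂g with hc
  -- basic integrability
  have hmeas₀ : Measurable fun z : ℝ => min 1 (Real.exp z / M) :=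
    measurable_const.min (Real.measurable_exp.div_const M)
  have hnonneg₀ : ∀ z : ℝ, 0 ≤ min 1 (Real.exp z / M) := fun z =>
    le_min zero_le_one (by positivity)
  have hint₀ : Integrable (fun z : ℝ => min 1 (Real.exp z / M)) g := by
    refine Integrable.mono' (integrable_const 1) hmeas₀.aestronglyMeasurable
      (Filter.Eventually.of_forall fun z => ?_)
    rw [Real.norm_eq_abs, abs_of_nonneg (hnonneg₀ z)]
    exact min_le_left _ _
  have hint₁ : ∀ z0 : ℝ, Integrable (fun z : ℝ => min 1 (Real.exp (z - z0))) g := by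
    intro z0
    refine Integrable.mono' (integrable_const 1)
      (measurable_const.min ((measurable_id.sub_const z0).exp)).aestronglyMeasurable
      (Filter.Eventually.of_forall fun z => ?_)
    rw [Real.norm_eq_abs, abs_of_nonneg (le_min zero_le_one (Real.exp_pos _).le)]
    exact min_le_left _ _
  -- pointwise comparison
  have hpt : ∀ z0 ≤ Real.log M, ∀ z : ℝ,
      min 1 (Real.exp z / M) ≤ min 1 (Real.exp (z - z0)) := by
    intro z0 hz0 z
    refine le_min (min_le_left _ _) (le_trans (min_le_right _ _) ?_)
    rw [Real.exp_sub, div_le_div_iff₀ hM0 (Real.exp_pos _)]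
    calc Real.exp z * Real.exp z0 ≤ Real.exp z * M := by
          have := Real.exp_le_exp.mpr hz0
          rw [Real.exp_log hM0] at this
          exact mul_le_mul_of_nonneg_left this (Real.exp_pos _).le
      _ = Real.exp z * M := rfl
  have hcpos : 0 < c := by
    rw [hc, integral_pos_iff_support_of_nonneg hnonneg₀ hint₀]
    have hsupp : Function.support (fun z : ℝ => min 1 (Real.exp z / M)) = Set.univ := by
      ext z
      simp only [Function.mem_support, Set.mem_univ, iff_true]
      exact ne_of_gt (lt_min one_pos (by positivity))
    rw [hsupp]
    simp
  have hmono : ∀ z ≤ Real.log M, c ≤ ∫ z', min 1 (Real.exp (z' - z)) ∂g := fun z hz =>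
    integral_mono hint₀ (hint₁ z) (hpt z hz)
  have hc1 : c ≤ 1 := by
    calc c ≤ ∫ _, (1:ℝ) ∂g := integral_mono hint₀ (integrable_const 1)
          (fun z => min_le_left _ _)
      _ = 1 := by simp
  refine ⟨hcpos, hmono, ?_⟩
  intro n
  set X : Option (ℕ ⊕ ℕ) → Ω → ℝ := (fun i : Option (ℕ ⊕ ℕ) => match i with
        | Option.none => Z0
        | Option.some (Sum.inl n) => Zstar n
        | Option.some (Sum.inr n) => u n) with hXdef
  have hX0 : X none = Z0 := rfl
  have hX1 : ∀ k, X (some (Sum.inl k)) = Zstar k := fun _ => rfl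
  have hX2 : ∀ k, X (some (Sum.inr k)) = u k := fun _ => rfl
  have hXmeas : ∀ i, Measurable (X i) := by
    rintro (_ | (k | k))
    · exact hZ0meas
    · exact hZsmeas k
    · exact humeas k
  -- per-step probability bound
  have hstep : ∀ z0 ≤ Real.log M, ∀ k,
      P {ω | min 1 (Real.exp (Zstar k ω - z0)) < u k ω} ≤ ENNReal.ofReal (1 - c) := by
    intro z0 hz0 k
    have hpairindep : IndepFun (Zstar k) (u k) P :=
      hindep.indepFun (show (some (Sum.inl k) : Option (ℕ ⊕ ℕ)) ≠ some (Sum.inr k) by simp)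
    have hmap : P.map (fun ω => (Zstar k ω, u k ω))
        = g.prod (volume.restrict (Set.Icc (0:ℝ) 1)) := by
      rw [(indepFun_iff_map_prod_eq_prod_map_map (hZsmeas k).aemeasurable
        (humeas k).aemeasurable).mp hpairindep, hZslaw, hulaw]
    have hDmeas : MeasurableSet {p : ℝ × ℝ | min 1 (Real.exp (p.1 - z0)) < p.2} :=
      measurableSet_lt (measurable_const.min ((measurable_fst.sub measurable_const).exp))
        measurable_snd
    have hset : {ω | min 1 (Real.exp (Zstar k ω - z0)) < u k ω}
        = (fun ω => (Zstar k ω, u k ω)) ⁻¹' {p : ℝ × ℝ | min 1 (Real.exp (p.1 - z0)) < p.2} :=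
      rfl
    rw [hset, ← Measure.map_apply ((hZsmeas k).prodMk (humeas k)) hDmeas, hmap,
      pimh_pair_prob g z0]
    calc ∫⁻ z, ENNReal.ofReal (1 - min 1 (Real.exp (z - z0))) ∂g
        ≤ ∫⁻ z, ENNReal.ofReal (1 - min 1 (Real.exp z / M)) ∂g := by
          refine lintegral_mono fun z => ENNReal.ofReal_le_ofReal ?_
          have := hpt z0 hz0 z
          linarith
      _ = ENNReal.ofReal (1 - c) := by
          have hint₂ : Integrable (fun z : ℝ => 1 - min 1 (Real.exp z / M)) g :=
            (integrable_const 1).sub hint₀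
          rw [← ofReal_integral_eq_lintegral_ofReal hint₂
            (Filter.Eventually.of_forall fun z => sub_nonneg.mpr (min_le_left _ _))]
          congr 1
          rw [integral_sub (integrable_const 1) hint₀]
          simp [hc]
  -- the block vector and its independence from Z0
  set W : Ω → ({x // x ∈ pimhBlock n} → ℝ) := fun ω i => X i ω with hWdef
  have hWmeas : Measurable W := measurable_pi_lambda _ fun i => hXmeas i
  have hIF0 : IndepFun Z0 W P := by
    have hdisj0 : Disjoint ({none} : Finset (Option (ℕ ⊕ ℕ))) (pimhBlock n) := by
      simp only [Finset.disjoint_left, Finset.mem_singleton, pimhBlock, Finset.mem_union,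
        Finset.mem_image]
      rintro a rfl
      rintro (⟨k, _, h⟩ | ⟨k, _, h⟩) <;> exact nomatch h
    have h := hindep.indepFun_finset {none} (pimhBlock n) hdisj0 hXmeas
    have h2 := h.comp
      (φ := fun v : ({none} : Finset (Option (ℕ ⊕ ℕ))) → ℝ =>
        v ⟨none, Finset.mem_singleton_self _⟩) (ψ := id)
      (measurable_pi_apply (X := fun _ : ({none} : Finset (Option (ℕ ⊕ ℕ))) => ℝ) _) measurable_id
    exact h2
  haveI hQprob : IsProbabilityMeasure (P.map W) := Measure.isProbabilityMeasure_map hWmeas.aemeasurable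
  have hjoint : P.map (fun ω => (Z0 ω, W ω)) = g.prod (P.map W) := by
    rw [(indepFun_iff_map_prod_eq_prod_map_map hZ0meas.aemeasurable
      hWmeas.aemeasurable).mp hIF0, hZ0law]
  -- the event in product space
  set D : Set (ℝ × ({x // x ∈ pimhBlock n} → ℝ)) :=
    {p | p.1 ≤ Real.log M} ∩ ⋂ k ∈ Finset.Icc 1 n,
      {p | min 1 (Real.exp (coordGet (pimhBlock n) p.2 (some (Sum.inl k)) - p.1))
        < coordGet (pimhBlock n) p.2 (some (Sum.inr k))} with hDdef
  have hDmeas : MeasurableSet D := by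
    refine MeasurableSet.inter (measurableSet_le measurable_fst measurable_const) ?_
    refine MeasurableSet.biInter (Finset.Icc 1 n).countable_toSet (fun k _ => ?_)
    exact measurableSet_lt
      (measurable_const.min ((((measurable_coordGet _ _).comp measurable_snd).sub
        measurable_fst).exp))
      ((measurable_coordGet _ _).comp measurable_snd)
  -- slice bound
  have hslice : ∀ z0 : ℝ, (P.map W) (Prod.mk z0 ⁻¹' D) ≤ ENNReal.ofReal ((1 - c) ^ n) := by
    intro z0
    by_cases hz0 : z0 ≤ Real.log M
    · have hpre : Prod.mk z0 ⁻¹' D = blockSet n z0 := by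
        ext v
        simp only [hDdef, blockSet, Set.mem_preimage, Set.mem_inter_iff, Set.mem_setOf_eq,
          Set.mem_iInter]
        exact and_iff_right hz0
      rw [hpre, Measure.map_apply hWmeas (measurableSet_blockSet n z0), hWdef,
        preimage_blockSet X Zstar u hX1 hX2 n z0]
      exact pimh_inner X Zstar u hX1 hX2 hXmeas hindep z0 (1 - c) (by linarith)
        (hstep z0 hz0) n
    · have hpre : Prod.mk z0 ⁻¹' D = ∅ := by
        ext v
        simp only [hDdef, Set.mem_preimage, Set.mem_inter_iff, Set.mem_setOf_eq,
          Set.mem_empty_iff_false, iff_false]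
        exact fun h => hz0 h.1
      simp [hpre]
  -- probability of the main event
  have hA : P ((fun ω => (Z0 ω, W ω)) ⁻¹' D) ≤ ENNReal.ofReal ((1 - c) ^ n) := by
    rw [← Measure.map_apply (hZ0meas.prodMk hWmeas) hDmeas, hjoint,
      Measure.prod_apply hDmeas]
    calc ∫⁻ z0, (P.map W) (Prod.mk z0 ⁻¹' D) ∂g
        ≤ ∫⁻ _, ENNReal.ofReal ((1 - c) ^ n) ∂g := lintegral_mono hslice
      _ = ENNReal.ofReal ((1 - c) ^ n) := by simp
  -- the null part
  have hnull : P (Z0 ⁻¹' Set.Ioi (Real.log M)) = 0 := by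
    rw [← Measure.map_apply hZ0meas measurableSet_Ioi, hZ0law, ← Set.compl_Iic,
      measure_compl measurableSet_Iic (measure_ne_top _ _), hbound]
    simp
  -- inclusion
  have hsub : {ω | (n : ℕ∞) < meetingTime Z0 Zstar u ω}
      ⊆ ((fun ω => (Z0 ω, W ω)) ⁻¹' D) ∪ Z0 ⁻¹' Set.Ioi (Real.log M) := by
    intro ω hω
    by_cases hz : Z0 ω ≤ Real.log M
    · left
      simp only [hDdef, Set.mem_preimage, Set.mem_inter_iff, Set.mem_setOf_eq, Set.mem_iInter]
      refine ⟨hz, fun k hk => ?_⟩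
      simp only [hWdef]
      rw [coordGet_apply _ _ (mem_pimhBlock_inl hk), coordGet_apply _ _ (mem_pimhBlock_inr hk)]
      show min 1 (Real.exp (Zstar k ω - Z0 ω)) < u k ω
      by_contra hle
      push_neg at hle
      have hmem : (k : ℕ∞) ∈ {t : ℕ∞ | ∃ m : ℕ, t = (m : ℕ∞) ∧ 1 ≤ m ∧
          u m ω ≤ min 1 (Real.exp (Zstar m ω - Z0 ω))} :=
        ⟨k, rfl, (Finset.mem_Icc.mp hk).1, hle⟩
      have hτ : meetingTime Z0 Zstar u ω ≤ (k : ℕ∞) := sInf_le hmem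
      have hkn : (k : ℕ∞) ≤ (n : ℕ∞) := Nat.cast_le.mpr (Finset.mem_Icc.mp hk).2
      exact absurd (lt_of_lt_of_le hω (hτ.trans hkn)) (lt_irrefl _)
    · right
      exact lt_of_not_ge hz
  calc P {ω | (n : ℕ∞) < meetingTime Z0 Zstar u ω}
      ≤ P (((fun ω => (Z0 ω, W ω)) ⁻¹' D) ∪ Z0 ⁻¹' Set.Ioi (Real.log M)) := measure_mono hsub
    _ ≤ P ((fun ω => (Z0 ω, W ω)) ⁻¹' D) + P (Z0 ⁻¹' Set.Ioi (Real.log M)) :=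
        measure_union_le _ _
    _ ≤ ENNReal.ofReal ((1 - c) ^ n) + 0 := by rw [hnull]; exact add_le_add_left hA 0
    _ = ENNReal.ofReal ((1 - c) ^ n) := add_zero _
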